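/- Let (X,d,W) be a UCW-hyperbolic space with monotone modulus of uniform convexity η, C ⊆ X a nonempty convex subset, T : C → C nonexpansive, (λ_n),(s_n) sequences in [0,1], (x_n) the Ishikawa iteration starting with x ∈ C, y_n := (1−s_n)x_n ⊕ s_n T x_n, and p a fixed point of T. Assume moreover that η can be written as η(r,ε) = ε·η̃(r,ε) where η̃ increases in ε for each fixed r. Let n ∈ ℕ and δ, a > 0 satisfy d(x_n,p) ≤ δ and a ≤ d(x_n, Ty_n). Then d(x_{n+1}, p) ≤ d(x_n, p) − 2aλ_n(1−λ_n)·η̃(δ, a/δ). -/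

import Mathlib

open Set Filter Metric Bornology Function

/-- A `W`-hyperbolic space structure on a metric space `X` (Kohlenbach).
`W x y l` denotes `(1-l)x ⊕ l y`. -/
structure WHyp (X : Type*) [MetricSpace X] where
  W : X → X → ℝ → X
  W1 : ∀ (x y z : X), ∀ l ∈ Set.Icc (0:ℝ) 1,
    dist z (W x y l) ≤ (1 - l) * dist z x + l * dist z y
  W2 : ∀ (x y : X), ∀ l ∈ Set.Icc (0:ℝ) 1, ∀ l' ∈ Set.Icc (0:ℝ) 1,
    dist (W x y l) (W x y l') = |l - l'| * dist x y
  W3 : ∀ (x y : X), ∀ l ∈ Set.Icc (0:ℝ) 1, W x y l = W y x (1 - l)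
  W4 : ∀ (x y z w : X), ∀ l ∈ Set.Icc (0:ℝ) 1,
    dist (W x z l) (W y w l) ≤ (1 - l) * dist x y + l * dist z w

/-- `η` is a modulus of uniform convexity for the `W`-hyperbolic space `H`. -/
def WHyp.UnifConvex {X : Type*} [MetricSpace X] (H : WHyp X) (η : ℝ → ℝ → ℝ) : Prop :=
  (∀ r ε : ℝ, 0 < r → ε ∈ Set.Ioc (0:ℝ) 2 → η r ε ∈ Set.Ioc (0:ℝ) 1) ∧
  (∀ (r ε : ℝ) (a x y : X), 0 < r → ε ∈ Set.Ioc (0:ℝ) 2 →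
    dist x a ≤ r → dist y a ≤ r → ε * r ≤ dist x y →
    dist (H.W x y (1/2)) a ≤ (1 - η r ε) * r)

/-- A modulus of uniform convexity is monotone if it decreases in `r` for fixed `ε`. -/
def MonotoneModulus (η : ℝ → ℝ → ℝ) : Prop :=
  ∀ r s ε : ℝ, 0 < r → r ≤ s → ε ∈ Set.Ioc (0:ℝ) 2 → η s ε ≤ η r ε

/-- A subset `C` is convex in the `W`-hyperbolic space `H`. -/
def WHyp.ConvexSet {X : Type*} [MetricSpace X] (H : WHyp X) (C : Set X) : Prop :=
  ∀ x ∈ C, ∀ y ∈ C, ∀ l ∈ Set.Icc (0:ℝ) 1, H.W x y l ∈ C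

/-- The Ishikawa iteration: `x₀ = x`,
`x_{n+1} = (1-λ_n)x_n ⊕ λ_n T((1-s_n)x_n ⊕ s_n T x_n)`. -/
def WHyp.ishSeq {X : Type*} [MetricSpace X] (H : WHyp X) (T : X → X) (l s : ℕ → ℝ)
    (x : X) : ℕ → X
  | 0 => x
  | n + 1 =>
      H.W (H.ishSeq T l s x n)
        (T (H.W (H.ishSeq T l s x n) (T (H.ishSeq T l s x n)) (s n))) (l n)

namespace WHyp

variable {X : Type*} [MetricSpace X] (H : WHyp X)

lemma W_zero (x y : X) : H.W x y 0 = x := by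
  have h := H.W1 x y x 0 ⟨le_refl 0, zero_le_one⟩
  simp at h
  exact h.symm

lemma W_one (x y : X) : H.W x y 1 = y := by
  have h := H.W1 x y y 1 ⟨zero_le_one, le_refl 1⟩
  simp at h
  exact h.symm

lemma dist_W_left (x y : X) {l : ℝ} (hl : l ∈ Set.Icc (0:ℝ) 1) :
    dist x (H.W x y l) = l * dist x y := by
  have h := H.W2 x y l hl 0 ⟨le_refl 0, zero_le_one⟩
  rw [H.W_zero, sub_zero, abs_of_nonneg hl.1, dist_comm] at h
  exact h

lemma dist_W_right (x y : X) {l : ℝ} (hl : l ∈ Set.Icc (0:ℝ) 1) :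
    dist y (H.W x y l) = (1 - l) * dist x y := by
  have h := H.W2 x y l hl 1 ⟨zero_le_one, le_refl 1⟩
  rw [H.W_one, abs_of_nonpos (by linarith [hl.2]), dist_comm] at h
  rw [h]; ring

/-- Uniqueness of convex combinations in a uniformly convex W-hyperbolic space. -/
lemma comb_unique {η : ℝ → ℝ → ℝ} (hU : H.UnifConvex η) (x y u : X) {l : ℝ}
    (hl : l ∈ Set.Ioo (0:ℝ) 1) (hxy : 0 < dist x y)
    (h1 : dist u x = l * dist x y) (h2 : dist u y = (1 - l) * dist x y) :
    u = H.W x y l := by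
  set z := H.W x y l with hz
  by_contra hne
  have hd : 0 < dist u z := dist_pos.mpr hne
  have hlI : l ∈ Set.Icc (0:ℝ) 1 := ⟨hl.1.le, hl.2.le⟩
  have hzx : dist z x = l * dist x y := by
    rw [dist_comm]; exact H.dist_W_left x y hlI
  have hzy : dist z y = (1 - l) * dist x y := by
    rw [dist_comm]; exact H.dist_W_right x y hlI
  set r1 := l * dist x y with hr1def
  set r2 := (1 - l) * dist x y with hr2def
  have hr1 : 0 < r1 := mul_pos hl.1 hxy
  have hr2 : 0 < r2 := mul_pos (by linarith [hl.2]) hxy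
  have hε1 : dist u z / r1 ∈ Set.Ioc (0:ℝ) 2 := by
    constructor
    · exact div_pos hd hr1
    · rw [div_le_iff₀ hr1]
      have := dist_triangle u x z
      rw [dist_comm x z] at this
      linarith [h1, hzx]
  have hε2 : dist u z / r2 ∈ Set.Ioc (0:ℝ) 2 := by
    constructor
    · exact div_pos hd hr2
    · rw [div_le_iff₀ hr2]
      have := dist_triangle u y z
      rw [dist_comm y z] at this
      linarith [h2, hzy]
  have hw1 := hU.2 r1 (dist u z / r1) x u z hr1 hε1 h1.le hzx.le
    (by rw [div_mul_cancel₀ _ hr1.ne'])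
  have hw2 := hU.2 r2 (dist u z / r2) y u z hr2 hε2 h2.le hzy.le
    (by rw [div_mul_cancel₀ _ hr2.ne'])
  have hη1 := (hU.1 r1 (dist u z / r1) hr1 hε1).1
  have hη2 := (hU.1 r2 (dist u z / r2) hr2 hε2).1
  have ht := dist_triangle x (H.W u z (1/2)) y
  rw [dist_comm x (H.W u z (1/2))] at ht
  nlinarith [hw1, hw2, ht]

/-- The improved convexity inequality for `l ∈ (0, 1/2]`. -/
lemma key_half {η ηt : ℝ → ℝ → ℝ} (hU : H.UnifConvex η)
    (hfact : ∀ r ε : ℝ, 0 < r → ε ∈ Set.Ioc (0:ℝ) 2 → η r ε = ε * ηt r ε)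
    (hinc : ∀ r : ℝ, 0 < r → ∀ ε ε' : ℝ, ε ∈ Set.Ioc (0:ℝ) 2 → ε' ∈ Set.Ioc (0:ℝ) 2 →
      ε ≤ ε' → ηt r ε ≤ ηt r ε')
    (r ε : ℝ) (hr : 0 < r) (hε : ε ∈ Set.Ioc (0:ℝ) 2)
    (a x y : X) (hxa : dist x a ≤ r) (hya : dist y a ≤ r) (hxy : ε * r ≤ dist x y)
    {l : ℝ} (hl : l ∈ Set.Ioc (0:ℝ) (1/2)) :
    dist (H.W x y l) a ≤ (1 - 2 * l * η r ε) * r := by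
  have hd : 0 < dist x y := lt_of_lt_of_le (mul_pos hε.1 hr) hxy
  set s := dist x y / r with hsdef
  have hs_eq : s * r = dist x y := div_mul_cancel₀ _ hr.ne'
  have hs : s ∈ Set.Ioc (0:ℝ) 2 := by
    constructor
    · exact div_pos hd hr
    · rw [div_le_iff₀ hr]
      have := dist_triangle x a y
      rw [dist_comm a y] at this
      linarith
  have hεs : ε ≤ s := (le_div_iff₀ hr).2 hxy
  have hm := hU.2 r s a x y hr hs hxa hya hs_eq.le
  -- η r ε ≤ η r s
  have hηtε_pos : 0 < ηt r ε := by
    have := (hU.1 r ε hr hε).1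
    rw [hfact r ε hr hε] at this
    by_contra hle
    push_neg at hle
    nlinarith [hε.1]
  have hηles : η r ε ≤ η r s := by
    rw [hfact r ε hr hε, hfact r s hr hs]
    have h1 := hinc r hr ε s hε hs hεs
    nlinarith
  have hm' : dist (H.W x y (1/2)) a ≤ (1 - η r ε) * r := by
    have : (1 - η r s) * r ≤ (1 - η r ε) * r := by nlinarith
    linarith
  -- the point v = W x m (2l) coincides with W x y l
  set m := H.W x y (1/2) with hmdef
  have hhalfI : (1/2 : ℝ) ∈ Set.Icc (0:ℝ) 1 := by norm_num
  have hxm : dist x m = (1/2) * dist x y := H.dist_W_left x y hhalfI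
  have hmy : dist m y = (1/2) * dist x y := by
    rw [dist_comm]
    have := H.dist_W_right x y hhalfI
    rw [this]; ring
  have h2l : 2 * l ∈ Set.Icc (0:ℝ) 1 := ⟨by linarith [hl.1], by linarith [hl.2]⟩
  set v := H.W x m (2 * l) with hvdef
  have hvx : dist v x = l * dist x y := by
    rw [dist_comm]
    rw [H.dist_W_left x m h2l, hxm]; ring
  have hvm : dist m v = (1 - 2 * l) * dist x m := H.dist_W_right x m h2l
  have hvy_le : dist v y ≤ (1 - l) * dist x y := by
    have := dist_triangle v m y
    rw [dist_comm v m] at this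
    rw [hvm, hxm] at this
    rw [hmy] at this
    nlinarith
  have hvy_ge : (1 - l) * dist x y ≤ dist v y := by
    have := dist_triangle x v y
    rw [dist_comm x v, hvx] at this
    linarith
  have hvy : dist v y = (1 - l) * dist x y := le_antisymm hvy_le hvy_ge
  have hlI : l ∈ Set.Ioo (0:ℝ) 1 := ⟨hl.1, lt_of_le_of_lt hl.2 (by norm_num)⟩
  have huniq : v = H.W x y l := H.comb_unique hU x y v hlI hd hvx hvy
  rw [← huniq]
  have hW1 := H.W1 x m a (2 * l) h2l
  rw [dist_comm]
  calc dist a v ≤ (1 - 2 * l) * dist a x + 2 * l * dist a m := hW1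
    _ ≤ (1 - 2 * l) * r + 2 * l * ((1 - η r ε) * r) := by
        rw [dist_comm a x, dist_comm a m]
        have h1 : (0:ℝ) ≤ 1 - 2 * l := by linarith [hl.2]
        have h2 : (0:ℝ) ≤ 2 * l := by linarith [hl.1]
        exact add_le_add (mul_le_mul_of_nonneg_left hxa h1)
          (mul_le_mul_of_nonneg_left hm' h2)
    _ = (1 - 2 * l * η r ε) * r := by ring

/-- The improved convexity inequality for arbitrary `l ∈ [0,1]`. -/
lemma key {η ηt : ℝ → ℝ → ℝ} (hU : H.UnifConvex η)
    (hfact : ∀ r ε : ℝ, 0 < r → ε ∈ Set.Ioc (0:ℝ) 2 → η r ε = ε * ηt r ε)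
    (hinc : ∀ r : ℝ, 0 < r → ∀ ε ε' : ℝ, ε ∈ Set.Ioc (0:ℝ) 2 → ε' ∈ Set.Ioc (0:ℝ) 2 →
      ε ≤ ε' → ηt r ε ≤ ηt r ε')
    (r ε : ℝ) (hr : 0 < r) (hε : ε ∈ Set.Ioc (0:ℝ) 2)
    (a x y : X) (hxa : dist x a ≤ r) (hya : dist y a ≤ r) (hxy : ε * r ≤ dist x y)
    {l : ℝ} (hl : l ∈ Set.Icc (0:ℝ) 1) :
    dist (H.W x y l) a ≤ (1 - 2 * l * (1 - l) * η r ε) * r := by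
  have hη := hU.1 r ε hr hε
  rcases le_or_gt l (1/2) with hle | hgt
  · rcases eq_or_lt_of_le hl.1 with h0 | h0
    · rw [← h0, H.W_zero]
      calc dist x a ≤ r := hxa
        _ = (1 - 2 * 0 * (1 - 0) * η r ε) * r := by ring
    · have := H.key_half hU hfact hinc r ε hr hε a x y hxa hya hxy ⟨h0, hle⟩
      have h2 : (1 - 2 * l * η r ε) * r ≤ (1 - 2 * l * (1 - l) * η r ε) * r := by
        nlinarith [mul_nonneg (mul_nonneg (mul_nonneg h0.le h0.le) hη.1.le) hr.le]
      linarith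
  · rcases eq_or_lt_of_le hl.2 with h1' | h1'
    · rw [h1', H.W_one]
      calc dist y a ≤ r := hya
        _ = (1 - 2 * 1 * (1 - 1) * η r ε) * r := by ring
    · rw [H.W3 x y l hl]
      have hl' : 1 - l ∈ Set.Ioc (0:ℝ) (1/2) := ⟨by linarith, by linarith⟩
      have hxy' : ε * r ≤ dist y x := by rwa [dist_comm]
      have := H.key_half hU hfact hinc r ε hr hε a y x hya hxa hxy' hl'
      have h2 : (1 - 2 * (1 - l) * η r ε) * r ≤ (1 - 2 * l * (1 - l) * η r ε) * r := by
        nlinarith [mul_nonneg (mul_nonneg (mul_nonneg (by linarith : (0:ℝ) ≤ 1 - l) (by linarith : (0:ℝ) ≤ 1 - l)) hη.1.le) hr.le]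
      linarith

end WHyp

theorem stmt15 {X : Type*} [MetricSpace X] (H : WHyp X)
    (η : ℝ → ℝ → ℝ) (hU : H.UnifConvex η) (hmon : MonotoneModulus η)
    (C : Set X) (hCne : C.Nonempty) (hCconv : H.ConvexSet C)
    (T : X → X) (hT : Set.MapsTo T C C)
    (hTne : ∀ x ∈ C, ∀ y ∈ C, dist (T x) (T y) ≤ dist x y)
    (l s : ℕ → ℝ) (hl : ∀ n, l n ∈ Set.Icc (0:ℝ) 1) (hs : ∀ n, s n ∈ Set.Icc (0:ℝ) 1)
    (x : X) (hx : x ∈ C)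
    (xs : ℕ → X) (hxs : xs = H.ishSeq T l s x)
    (ys : ℕ → X) (hys : ∀ n, ys n = H.W (xs n) (T (xs n)) (s n))
    (p : X) (hp : p ∈ C) (hfix : T p = p)
    (ηt : ℝ → ℝ → ℝ)
    (hfact : ∀ r ε : ℝ, 0 < r → ε ∈ Set.Ioc (0:ℝ) 2 → η r ε = ε * ηt r ε)
    (hinc : ∀ r : ℝ, 0 < r → ∀ ε ε' : ℝ, ε ∈ Set.Ioc (0:ℝ) 2 → ε' ∈ Set.Ioc (0:ℝ) 2 →
      ε ≤ ε' → ηt r ε ≤ ηt r ε')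
    (n : ℕ) (δ a : ℝ) (hδ : 0 < δ) (ha : 0 < a)
    (h1 : dist (xs n) p ≤ δ) (h2 : a ≤ dist (xs n) (T (ys n))) :
    dist (xs (n + 1)) p ≤ dist (xs n) p - 2 * a * l n * (1 - l n) * ηt δ (a / δ) := by
  have hmem : ∀ m, xs m ∈ C := by
    subst hxs
    intro m
    induction m with
    | zero => exact hx
    | succ m ih =>
        exact hCconv _ ih _ (hT (hCconv _ ih _ (hT ih) _ (hs m))) _ (hl m)
  have hxC : xs n ∈ C := hmem n
  have hyC : ys n ∈ C := by
    rw [hys n]; exact hCconv _ hxC _ (hT hxC) _ (hs n)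
  set dn := dist (xs n) p with hdndef
  -- dist (ys n) p ≤ dn
  have hdy : dist (ys n) p ≤ dn := by
    rw [hdndef, hys n, dist_comm]
    have hW := H.W1 (xs n) (T (xs n)) p (s n) (hs n)
    have hTnx : dist (T p) (T (xs n)) ≤ dist p (xs n) := hTne p hp (xs n) hxC
    rw [hfix] at hTnx
    have hsn := hs n
    rw [dist_comm p (xs n)] at hW hTnx
    nlinarith [hsn.1, hsn.2]
  have hTy : dist (T (ys n)) p ≤ dn := by
    calc dist (T (ys n)) p = dist (T (ys n)) (T p) := by rw [hfix]
      _ ≤ dist (ys n) p := hTne _ hyC _ hp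
      _ ≤ dn := hdy
  have ha2 : a ≤ 2 * dn := by
    have ht := dist_triangle (xs n) p (T (ys n))
    rw [dist_comm p (T (ys n))] at ht
    linarith
  have hdn : 0 < dn := by linarith
  have hεdn : a / dn ∈ Set.Ioc (0:ℝ) 2 := ⟨div_pos ha hdn, by rw [div_le_iff₀ hdn]; linarith⟩
  have hεδ : a / δ ∈ Set.Ioc (0:ℝ) 2 := ⟨div_pos ha hδ, by rw [div_le_iff₀ hδ]; linarith⟩
  have hstep : xs (n + 1) = H.W (xs n) (T (ys n)) (l n) := by
    rw [hys n, hxs]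
    rfl
  have hkey := H.key hU hfact hinc dn (a / dn) hdn hεdn p (xs n) (T (ys n))
    (le_refl dn) hTy (by rw [div_mul_cancel₀ _ hdn.ne']; exact h2) (hl n)
  rw [← hstep] at hkey
  have hfac : η dn (a / dn) = (a / dn) * ηt dn (a / dn) := hfact dn (a / dn) hdn hεdn
  have heq : (1 - 2 * l n * (1 - l n) * η dn (a / dn)) * dn
      = dn - 2 * a * l n * (1 - l n) * ηt dn (a / dn) := by
    rw [hfac]
    field_simp
  rw [heq] at hkey
  -- ηt δ (a/δ) ≤ ηt dn (a/dn)
  have hstep1 : ηt δ (a / δ) ≤ ηt dn (a / δ) := by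
    have hmono := hmon dn δ (a / δ) hdn h1 hεδ
    rw [hfact δ (a / δ) hδ hεδ, hfact dn (a / δ) hdn hεδ] at hmono
    exact le_of_mul_le_mul_left hmono hεδ.1
  have hstep2 : ηt dn (a / δ) ≤ ηt dn (a / dn) := by
    refine hinc dn hdn (a / δ) (a / dn) hεδ hεdn ?_
    gcongr
  have hll := hl n
  have hnn : (0:ℝ) ≤ 2 * a * l n * (1 - l n) :=
    mul_nonneg (mul_nonneg (by linarith : (0:ℝ) ≤ 2 * a) hll.1)
      (by linarith [hll.2] : (0:ℝ) ≤ 1 - l n)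
  nlinarith [hstep1, hstep2]
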